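/- (Novikov-Kazamaki orders.) For a ∈ ℝ and a measurable function φ, let NK^φ(a) denote the class of continuous local martingales L on [0,T_0) with L_0 = 0 for which sup_{τ ∈ 𝒯} E[ S^{L,a,φ}_τ ] < ∞. Then for any real numbers a < b < 1 < c < d and any continuous lower function φ, one has NK^φ(a) ⊆ NK^φ(b) and NK^φ(d) ⊆ NK^φ(c). -/

import Mathlib

open MeasureTheory ProbabilityTheory Filter Set
open scoped NNReal ENNReal

noncomputable section

namespace PaperNK

variable {Ω : Type*} {m : MeasurableSpace Ω}

/-- A (real-valued) process is a local martingale if there is a localizing sequence of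
stopping times increasing to infinity such that every stopped process is a martingale. -/
def IsLocalMartingale (ℱ : Filtration ℝ≥0 m) (μ : Measure Ω) (X : ℝ≥0 → Ω → ℝ) : Prop :=
  ∃ σ : ℕ → Ω → ℝ≥0,
    (∀ n, IsStoppingTime ℱ (fun ω => (σ n ω : WithTop ℝ≥0))) ∧
    (∀ ω, Tendsto (fun n => σ n ω) atTop atTop) ∧
    (∀ n, Martingale (stoppedProcess X (fun ω => (σ n ω : WithTop ℝ≥0))) ℱ μ)

/-- `X` is a local martingale on the stochastic interval `[0, ρ)`: for every stopping
time `σ` with `σ < ρ` everywhere, the stopped process `X^σ` is a local martingale. -/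
def IsLocalMartingaleOn (ℱ : Filtration ℝ≥0 m) (μ : Measure Ω)
    (X : ℝ≥0 → Ω → ℝ) (ρ : Ω → ℝ≥0∞) : Prop :=
  ∀ σ : Ω → ℝ≥0, IsStoppingTime ℱ (fun ω => (σ ω : WithTop ℝ≥0)) → (∀ ω, (σ ω : ℝ≥0∞) < ρ ω) →
    IsLocalMartingale ℱ μ (stoppedProcess X (fun ω => (σ ω : WithTop ℝ≥0)))

/-- All paths of `X` are continuous on the stochastic interval `[0, ρ)`. -/
def ContPathsOn (X : ℝ≥0 → Ω → ℝ) (ρ : Ω → ℝ≥0∞) : Prop :=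
  ∀ ω, ContinuousOn (fun t => X t ω) {t : ℝ≥0 | (t : ℝ≥0∞) < ρ ω}

/-- `Q` is the quadratic variation `⟨L⟩` of the continuous local martingale `L` on the
stochastic interval `[0, ρ)`: it starts at `0`, is adapted, nondecreasing and continuous
on `[0, ρ)`, and `L ^ 2 - Q` is a local martingale on `[0, ρ)`. -/
def IsQuadraticVariationOn (ℱ : Filtration ℝ≥0 m) (μ : Measure Ω)
    (L Q : ℝ≥0 → Ω → ℝ) (ρ : Ω → ℝ≥0∞) : Prop :=
  (∀ ω, Q 0 ω = 0) ∧ Adapted ℱ Q ∧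
    (∀ ω, MonotoneOn (fun t => Q t ω) {t : ℝ≥0 | (t : ℝ≥0∞) < ρ ω}) ∧
    ContPathsOn Q ρ ∧
    IsLocalMartingaleOn ℱ μ (fun t ω => L t ω ^ 2 - Q t ω) ρ

/-- First hitting time of the level `c` by the process `X` (with value `∞` if `c` is never hit). -/
def firstHit (X : ℝ≥0 → Ω → ℝ) (c : ℝ) (ω : Ω) : ℝ≥0∞ :=
  sInf {t : ℝ≥0∞ | ∃ s : ℝ≥0, (s : ℝ≥0∞) = t ∧ X s ω = c}

/-- The data of a continuous nonnegative local martingale `Z = 𝓔(L) = exp (L - Q / 2)` with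
`Z_0 = 1`, where `L` is a continuous local martingale on `[0, T_0)` with `L_0 = 0`, `Q = ⟨L⟩`
is its quadratic variation, and `T_0` is the first hitting time of zero by `Z`; `Z` is
extended continuously (by the value `0`) after `T_0`. -/
structure StochExpSetup (ℱ : Filtration ℝ≥0 m) (μ : Measure Ω)
    (L Q Z : ℝ≥0 → Ω → ℝ) : Prop where
  nonneg : ∀ (t : ℝ≥0) (ω : Ω), 0 ≤ Z t ω
  init : ∀ ω : Ω, Z 0 ω = 1
  contZ : ∀ ω : Ω, Continuous fun t => Z t ω
  adaptedZ : Adapted ℱ Z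
  locmartZ : IsLocalMartingale ℱ μ Z
  initL : ∀ ω : Ω, L 0 ω = 0
  locmartL : IsLocalMartingaleOn ℱ μ L fun ω => firstHit Z 0 ω
  contL : ContPathsOn L fun ω => firstHit Z 0 ω
  quadvar : IsQuadraticVariationOn ℱ μ L Q fun ω => firstHit Z 0 ω
  expEq : ∀ (t : ℝ≥0) (ω : Ω), (t : ℝ≥0∞) < firstHit Z 0 ω →
    Z t ω = Real.exp (L t ω - Q t ω / 2)
  absorbed : ∀ (t : ℝ≥0) (ω : Ω), firstHit Z 0 ω ≤ (t : ℝ≥0∞) → Z t ω = 0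

/-- The class `𝒯` of stopping times: `τ ∈ 𝒯` iff `τ ≤ (T - 1/n) ⊓ n` for some `n ∈ ℕ`. -/
def MemT (ℱ : Filtration ℝ≥0 m) (T : ℝ≥0∞) (τ : Ω → ℝ≥0) : Prop :=
  IsStoppingTime ℱ (fun ω => (τ ω : WithTop ℝ≥0)) ∧ ∃ n : ℕ, 0 < n ∧ ∀ ω, (τ ω : ℝ≥0∞) ≤ (T - 1 / n) ⊓ n

/-- `Z` is a (true) martingale on the time interval `[0, T]`. -/
def IsMartingaleOn (ℱ : Filtration ℝ≥0 m) (μ : Measure Ω)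
    (Z : ℝ≥0 → Ω → ℝ) (T : ℝ≥0∞) : Prop :=
  (∀ t : ℝ≥0, (t : ℝ≥0∞) ≤ T → Integrable (Z t) μ ∧ StronglyMeasurable[ℱ t] (Z t)) ∧
  ∀ s t : ℝ≥0, s ≤ t → (t : ℝ≥0∞) ≤ T → μ[Z t|ℱ s] =ᵐ[μ] Z s

/-- `Z` is a uniformly integrable martingale on the time interval `[0, T]`. -/
def IsUIMartingaleOn (ℱ : Filtration ℝ≥0 m) (μ : Measure Ω)
    (Z : ℝ≥0 → Ω → ℝ) (T : ℝ≥0∞) : Prop :=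
  IsMartingaleOn ℱ μ Z T ∧
  UniformIntegrable (fun t : {t : ℝ≥0 // (t : ℝ≥0∞) ≤ T} => Z t.1) 1 μ

/-- `X` is a submartingale on the time interval `[0, T]`. -/
def IsSubmartingaleOn (ℱ : Filtration ℝ≥0 m) (μ : Measure Ω)
    (X : ℝ≥0 → Ω → ℝ) (T : ℝ≥0∞) : Prop :=
  (∀ t : ℝ≥0, (t : ℝ≥0∞) ≤ T → Integrable (X t) μ ∧ StronglyMeasurable[ℱ t] (X t)) ∧
  ∀ s t : ℝ≥0, s ≤ t → (t : ℝ≥0∞) ≤ T → X s ≤ᵐ[μ] μ[X t|ℱ s]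

/-- `B` is a Brownian motion (starting at zero) under `μ`: continuous paths, independent
increments, and Gaussian increments `B_t - B_s ~ N(0, t - s)`. -/
structure IsBrownianMotion {Ω' : Type*} [MeasurableSpace Ω'] (μ : Measure Ω')
    (B : ℝ≥0 → Ω' → ℝ) : Prop where
  isProb : IsProbabilityMeasure μ
  meas : ∀ t, Measurable (B t)
  start : ∀ ω, B 0 ω = 0
  cont : ∀ ω, Continuous fun t => B t ω
  indepIncr : ∀ (n : ℕ) (t : Fin (n + 1) → ℝ≥0), Monotone t →
    iIndepFun
      (fun i : Fin n => fun ω => B (t i.succ) ω - B (t i.castSucc) ω) μ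
  gaussIncr : ∀ s t : ℝ≥0, s ≤ t →
    μ.map (fun ω => B t ω - B s ω) = gaussianReal 0 (t - s)

/-- A continuous function `φ` (on `[0,∞)`) is a lower function iff
`limsup_{t → ∞} (B_t - φ(t)) = ∞` almost surely for every Brownian motion `B`. -/
def IsLowerFunction (φ : ℝ → ℝ) : Prop :=
  ∀ (Ω' : Type) [MeasurableSpace Ω'] (μ' : Measure Ω') (B : ℝ≥0 → Ω' → ℝ),
    IsBrownianMotion μ' B →
    ∀ᵐ ω ∂μ', ∀ c : ℝ, ∃ᶠ t : ℝ≥0 in atTop, c < B t ω - φ (t : ℝ)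

/-- The process `S^{L,a,φ} = exp (a L + (1/2 - a) ⟨L⟩ - |a-1| φ(⟨L⟩)) 1_{Z > 0}`. -/
def Sproc (L Q Z : ℝ≥0 → Ω → ℝ) (a : ℝ) (φ : ℝ → ℝ) (t : ℝ≥0) (ω : Ω) : ℝ :=
  if 0 < Z t ω then Real.exp (a * L t ω + (1 / 2 - a) * Q t ω - |a - 1| * φ (Q t ω)) else 0

/-- The Novikov-Kazamaki condition `sup_{τ ∈ 𝒯} E[S^{L,a,φ}_τ] < ∞`. -/
def NKCond (ℱ : Filtration ℝ≥0 m) (μ : Measure Ω) (L Q Z : ℝ≥0 → Ω → ℝ)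
    (T : ℝ≥0∞) (a : ℝ) (φ : ℝ → ℝ) : Prop :=
  (⨆ τ : {τ : Ω → ℝ≥0 // MemT ℱ T τ},
    ∫⁻ ω, ENNReal.ofReal (Sproc L Q Z a φ (τ.1 ω) ω) ∂μ) < ⊤

/-- A Brownian motion with respect to the filtration `ℱ`: it is adapted and its
increments are independent of the past. -/
structure IsBrownianMotionFiltered (ℱ : Filtration ℝ≥0 m) (μ : Measure Ω)
    (B : ℝ≥0 → Ω → ℝ) : Prop extends IsBrownianMotion μ B where
  adapted : Adapted ℱ B
  indepPast : ∀ s t : ℝ≥0, s ≤ t →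
    Indep (MeasurableSpace.comap (fun ω => B t ω - B s ω) inferInstance) (ℱ s) μ



section Aux

open scoped Topology

variable {ℱ : Filtration ℝ≥0 m} {μ : Measure Ω} {L Q Z : ℝ≥0 → Ω → ℝ}

lemma sproc_nonneg (L Q Z : ℝ≥0 → Ω → ℝ) (a : ℝ) (φ : ℝ → ℝ) (t : ℝ≥0) (ω : Ω) :
    0 ≤ Sproc L Q Z a φ t ω := by
  unfold Sproc
  split
  · exact (Real.exp_pos _).le
  · exact le_rfl

/-- Pointwise convexity bound: `S^e ≤ θ S^{a'} + (1-θ) Z` when `e - 1 = θ (a' - 1)`. -/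
lemma sproc_convex (hs : StochExpSetup ℱ μ L Q Z) {a' e θ : ℝ}
    (hθ0 : 0 ≤ θ) (hθ1 : θ ≤ 1) (hθ : e - 1 = θ * (a' - 1)) (φ : ℝ → ℝ) (t : ℝ≥0) (ω : Ω) :
    Sproc L Q Z e φ t ω ≤ θ * Sproc L Q Z a' φ t ω + (1 - θ) * Z t ω := by
  by_cases h : 0 < Z t ω
  · have ht : (t : ℝ≥0∞) < firstHit Z 0 ω := by
      by_contra hc
      push_neg at hc
      have := hs.absorbed t ω hc
      linarith
    have hZ : Z t ω = Real.exp (L t ω - Q t ω / 2) := hs.expEq t ω ht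
    have habs : |e - 1| = θ * |a' - 1| := by
      rw [hθ, abs_mul, abs_of_nonneg hθ0]
    have hexp : e * L t ω + (1 / 2 - e) * Q t ω - |e - 1| * φ (Q t ω)
        = θ * (a' * L t ω + (1 / 2 - a') * Q t ω - |a' - 1| * φ (Q t ω))
          + (1 - θ) * (L t ω - Q t ω / 2) := by
      rw [habs]
      linear_combination (L t ω - Q t ω) * hθ
    have hconv : Real.exp (θ * (a' * L t ω + (1 / 2 - a') * Q t ω - |a' - 1| * φ (Q t ω))
          + (1 - θ) * (L t ω - Q t ω / 2))
        ≤ θ * Real.exp (a' * L t ω + (1 / 2 - a') * Q t ω - |a' - 1| * φ (Q t ω))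
          + (1 - θ) * Real.exp (L t ω - Q t ω / 2) := by
      simpa only [smul_eq_mul] using convexOn_exp.2 (Set.mem_univ
          (a' * L t ω + (1 / 2 - a') * Q t ω - |a' - 1| * φ (Q t ω)))
        (Set.mem_univ (L t ω - Q t ω / 2)) hθ0 (by linarith : (0:ℝ) ≤ 1 - θ)
        (by ring : θ + (1 - θ) = 1)
    simp only [Sproc, if_pos h]
    rw [hZ, hexp]
    exact hconv
  · simp only [Sproc, if_neg h]
    have h1 := sproc_nonneg L Q Z a' φ t ω
    have h2 := hs.nonneg t ω
    nlinarith

/-- Expectation of the stochastic exponential at a bounded stopping time is at most one. -/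
lemma lintegral_Z_le_one [IsProbabilityMeasure μ] (hs : StochExpSetup ℱ μ L Q Z)
    {τ : Ω → ℝ≥0} (hτ : IsStoppingTime ℱ (fun ω => (τ ω : WithTop ℝ≥0))) {n : ℝ≥0} (hτn : ∀ ω, τ ω ≤ n) :
    ∫⁻ ω, ENNReal.ofReal (Z (τ ω) ω) ∂μ ≤ 1 := by
  obtain ⟨σ, hσstop, hσtop, hσmart⟩ := hs.locmartZ
  have prog : IsStronglyProgressive ℱ Z :=
    hs.adaptedZ.stronglyAdapted.isStronglyProgressive_of_continuous hs.contZ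
  -- dyadic upper discretization of τ
  set τm : ℕ → Ω → ℝ≥0 := fun k ω => (⌈τ ω * 2 ^ k⌉₊ : ℝ≥0) / 2 ^ k with hτm_def
  have h2k : ∀ k : ℕ, (0 : ℝ≥0) < 2 ^ k := fun k => pow_pos two_pos k
  have hle : ∀ k ω, τ ω ≤ τm k ω := by
    intro k ω
    rw [hτm_def]
    rw [le_div_iff₀ (h2k k)]
    exact Nat.le_ceil _
  have hub' : ∀ k ω, τm k ω ≤ τ ω + (1 / 2) ^ k := by
    intro k ω
    rw [hτm_def]
    rw [div_le_iff₀ (h2k k)]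
    have := (Nat.ceil_lt_add_one (zero_le (a := τ ω * 2 ^ k))).le
    calc (⌈τ ω * 2 ^ k⌉₊ : ℝ≥0) ≤ τ ω * 2 ^ k + 1 := this
      _ = (τ ω + (1 / 2) ^ k) * 2 ^ k := by
          rw [add_mul, div_pow, one_pow, div_mul_cancel₀ _ (h2k k).ne']
  have hub : ∀ k ω, τm k ω ≤ n + 1 := by
    intro k ω
    refine (hub' k ω).trans (add_le_add (hτn ω) ?_)
    calc ((1 : ℝ≥0) / 2) ^ k ≤ 1 ^ k := pow_le_pow_left₀ zero_le (by norm_num) k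
      _ = 1 := one_pow k
  have hstop : ∀ k, IsStoppingTime ℱ (fun ω => (τm k ω : WithTop ℝ≥0)) := by
    intro k t
    simp only [WithTop.coe_le_coe]
    have hset : {ω | τm k ω ≤ t} = {ω | τ ω ≤ (⌊t * 2 ^ k⌋₊ : ℝ≥0) / 2 ^ k} := by
      ext ω
      simp only [Set.mem_setOf_eq, hτm_def]
      rw [div_le_iff₀ (h2k k), le_div_iff₀ (h2k k),
        ← Nat.le_floor_iff zero_le, Nat.ceil_le]
    rw [hset]
    refine ℱ.mono ?_ _
      (by simpa only [WithTop.coe_le_coe] using hτ ((⌊t * 2 ^ k⌋₊ : ℝ≥0) / 2 ^ k))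
    rw [div_le_iff₀ (h2k k)]
    exact Nat.floor_le zero_le
  have hcount : ∀ k, (Set.range (fun ω => (τm k ω : WithTop ℝ≥0))).Countable := by
    intro k
    refine Set.Countable.mono ?_
      (Set.countable_range fun j : ℕ => (((j : ℝ≥0) / 2 ^ k : ℝ≥0) : WithTop ℝ≥0))
    rintro x ⟨ω, rfl⟩
    exact ⟨⌈τ ω * 2 ^ k⌉₊, rfl⟩
  have htend : ∀ ω, Tendsto (fun k => τm k ω) atTop (𝓝 (τ ω)) := by
    intro ω
    have h1 : Tendsto (fun k : ℕ => τ ω + (1 / 2 : ℝ≥0) ^ k) atTop (𝓝 (τ ω + 0)) :=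
      tendsto_const_nhds.add
        (NNReal.tendsto_pow_atTop_nhds_zero_of_lt_one (by exact_mod_cast (by norm_num : (1/2:ℝ) < 1)))
    rw [add_zero] at h1
    exact tendsto_of_tendsto_of_tendsto_of_le_of_le tendsto_const_nhds h1
      (fun k => hle k ω) (fun k => hub' k ω)
  -- Step A: exact expectation one for discretized stopping times and stopped martingales
  have stepA : ∀ j k : ℕ,
      ∫⁻ ω, ENNReal.ofReal (Z (min (τm j ω) (σ k ω)) ω) ∂μ = 1 := by
    intro j k
    have hM := hσmart k
    have hint : Integrable (stoppedProcess Z (fun ω => (σ k ω : WithTop ℝ≥0)) (n + 1)) μ := hM.integrable _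
    have hnn : 0 ≤ᵐ[μ] stoppedProcess Z (fun ω => (σ k ω : WithTop ℝ≥0)) (n + 1) :=
      Filter.Eventually.of_forall fun ω => hs.nonneg _ _
    have hsampling := hM.stoppedValue_ae_eq_condExp_of_le_const_of_countable_range
      (hstop j) (fun ω => WithTop.coe_le_coe.mpr (hub j ω)) (hcount j)
    have heq0 : ∫ ω, stoppedProcess Z (fun ω => (σ k ω : WithTop ℝ≥0)) (n + 1) ω ∂μ = 1 := by
      have h0 := hM.condExp_ae_eq (zero_le (a := n + 1))
      have : ∫ ω, stoppedProcess Z (fun ω => (σ k ω : WithTop ℝ≥0)) (n + 1) ω ∂μ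
          = ∫ ω, stoppedProcess Z (fun ω => (σ k ω : WithTop ℝ≥0)) 0 ω ∂μ := by
        rw [← integral_condExp (ℱ.le 0)]
        exact integral_congr_ae h0
      rw [this]
      have : ∀ ω, stoppedProcess Z (fun ω => (σ k ω : WithTop ℝ≥0)) 0 ω = 1 := by
        intro ω
        simp only [stoppedProcess]
        rw [min_eq_left (WithTop.coe_le_coe.mpr (zero_le (a := σ k ω)))]
        exact hs.init ω
      simp only [this]
      simp
    calc ∫⁻ ω, ENNReal.ofReal (Z (min (τm j ω) (σ k ω)) ω) ∂μ
        = ∫⁻ ω, ENNReal.ofReal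
            (stoppedValue (stoppedProcess Z (fun ω => (σ k ω : WithTop ℝ≥0)))
              (fun ω => (τm j ω : WithTop ℝ≥0)) ω) ∂μ :=
            lintegral_congr fun ω => by
              simp only [stoppedValue, stoppedProcess]
              rw [WithTop.untopA_eq_untop WithTop.coe_ne_top, WithTop.untop_coe, ← WithTop.coe_min,
                WithTop.untopA_eq_untop WithTop.coe_ne_top, WithTop.untop_coe]
      _ = ∫⁻ ω, ENNReal.ofReal
            ((μ[stoppedProcess Z (fun ω => (σ k ω : WithTop ℝ≥0)) (n + 1)|((hstop j)).measurableSpace]) ω) ∂μ :=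
          lintegral_congr_ae (hsampling.fun_comp ENNReal.ofReal)
      _ = ENNReal.ofReal
            (∫ ω, (μ[stoppedProcess Z (fun ω => (σ k ω : WithTop ℝ≥0)) (n + 1)|((hstop j)).measurableSpace]) ω ∂μ) :=
          (ofReal_integral_eq_lintegral_ofReal integrable_condExp
            (condExp_nonneg hnn)).symm
      _ = ENNReal.ofReal (∫ ω, stoppedProcess Z (fun ω => (σ k ω : WithTop ℝ≥0)) (n + 1) ω ∂μ) := by
          rw [integral_condExp]
      _ = 1 := by rw [heq0, ENNReal.ofReal_one]
  -- Step B: Fatou over the discretization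
  have stepB : ∀ k : ℕ,
      ∫⁻ ω, ENNReal.ofReal (Z (min (τ ω) (σ k ω)) ω) ∂μ ≤ 1 := by
    intro k
    have hmeas : ∀ j : ℕ,
        Measurable fun ω => ENNReal.ofReal (Z (min (τm j ω) (σ k ω)) ω) := by
      intro j
      have hst : IsStoppingTime ℱ fun ω => ((min (τm j ω) (σ k ω) : ℝ≥0) : WithTop ℝ≥0) := by
        simpa only [WithTop.coe_min] using (hstop j).min (hσstop k)
      exact ((measurable_stoppedValue prog hst).mono hst.measurableSpace_le
        le_rfl).ennreal_ofReal
    have hpt : ∀ ω, Tendsto (fun j => ENNReal.ofReal (Z (min (τm j ω) (σ k ω)) ω)) atTop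
        (𝓝 (ENNReal.ofReal (Z (min (τ ω) (σ k ω)) ω))) := by
      intro ω
      have h1 : Tendsto (fun j => min (τm j ω) (σ k ω)) atTop
          (𝓝 (min (τ ω) (σ k ω))) := (htend ω).min tendsto_const_nhds
      exact (ENNReal.continuous_ofReal.tendsto _).comp
        (((hs.contZ ω).tendsto _).comp h1)
    calc ∫⁻ ω, ENNReal.ofReal (Z (min (τ ω) (σ k ω)) ω) ∂μ
        = ∫⁻ ω, liminf (fun j => ENNReal.ofReal (Z (min (τm j ω) (σ k ω)) ω)) atTop ∂μ :=
          lintegral_congr fun ω => ((hpt ω).liminf_eq).symm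
      _ ≤ liminf (fun j => ∫⁻ ω, ENNReal.ofReal (Z (min (τm j ω) (σ k ω)) ω) ∂μ) atTop :=
          lintegral_liminf_le hmeas
      _ = 1 := by
          simp only [stepA]
          exact liminf_const 1
  -- Step C: Fatou over the localizing sequence
  have hmeas2 : ∀ k : ℕ,
      Measurable fun ω => ENNReal.ofReal (Z (min (τ ω) (σ k ω)) ω) := by
    intro k
    have hst : IsStoppingTime ℱ fun ω => ((min (τ ω) (σ k ω) : ℝ≥0) : WithTop ℝ≥0) := by
      simpa only [WithTop.coe_min] using hτ.min (hσstop k)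
    exact ((measurable_stoppedValue prog hst).mono hst.measurableSpace_le
      le_rfl).ennreal_ofReal
  have hpt2 : ∀ ω, Tendsto (fun k => ENNReal.ofReal (Z (min (τ ω) (σ k ω)) ω)) atTop
      (𝓝 (ENNReal.ofReal (Z (τ ω) ω))) := by
    intro ω
    have hev : ∀ᶠ k in atTop,
        ENNReal.ofReal (Z (τ ω) ω) = ENNReal.ofReal (Z (min (τ ω) (σ k ω)) ω) := by
      filter_upwards [(hσtop ω).eventually_ge_atTop (τ ω)] with k hk
      rw [min_eq_left hk]
    exact Tendsto.congr' hev tendsto_const_nhds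
  calc ∫⁻ ω, ENNReal.ofReal (Z (τ ω) ω) ∂μ
      = ∫⁻ ω, liminf (fun k => ENNReal.ofReal (Z (min (τ ω) (σ k ω)) ω)) atTop ∂μ :=
        lintegral_congr fun ω => ((hpt2 ω).liminf_eq).symm
    _ ≤ liminf (fun k => ∫⁻ ω, ENNReal.ofReal (Z (min (τ ω) (σ k ω)) ω) ∂μ) atTop :=
        lintegral_liminf_le hmeas2
    _ ≤ 1 := liminf_le_of_le (by isBoundedDefault)
        (fun bd hbd => by
          obtain ⟨k, hk⟩ := hbd.exists
          exact hk.trans (stepB k))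

/-- The main monotonicity step for the Novikov-Kazamaki classes. -/
lemma nk_mono [IsProbabilityMeasure μ] (hs : StochExpSetup ℱ μ L Q Z) (T : ℝ≥0∞)
    (φ : ℝ → ℝ) {a' e θ : ℝ} (hθ0 : 0 ≤ θ) (hθ1 : θ ≤ 1) (hθ : e - 1 = θ * (a' - 1))
    (h : NKCond ℱ μ L Q Z T a' φ) : NKCond ℱ μ L Q Z T e φ := by
  have prog : IsStronglyProgressive ℱ Z :=
    hs.adaptedZ.stronglyAdapted.isStronglyProgressive_of_continuous hs.contZ
  rw [NKCond] at h ⊢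
  set Sup := ⨆ τ : {τ : Ω → ℝ≥0 // MemT ℱ T τ},
    ∫⁻ ω, ENNReal.ofReal (Sproc L Q Z a' φ (τ.1 ω) ω) ∂μ with hSup_def
  have key : ∀ τ : {τ : Ω → ℝ≥0 // MemT ℱ T τ},
      ∫⁻ ω, ENNReal.ofReal (Sproc L Q Z e φ (τ.1 ω) ω) ∂μ ≤
        ENNReal.ofReal θ * Sup + ENNReal.ofReal (1 - θ) := by
    rintro ⟨τ, hτstop, nn, hnn, hτn⟩
    have hτn' : ∀ ω, τ ω ≤ (nn : ℝ≥0) := by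
      intro ω
      have h1 : (τ ω : ℝ≥0∞) ≤ (nn : ℕ) := (hτn ω).trans inf_le_right
      exact_mod_cast h1
    have hZmeas : Measurable fun ω => ENNReal.ofReal ((1 - θ) * Z (τ ω) ω) :=
      (((measurable_stoppedValue prog hτstop).mono hτstop.measurableSpace_le
        le_rfl).const_mul (1 - θ)).ennreal_ofReal
    calc ∫⁻ ω, ENNReal.ofReal (Sproc L Q Z e φ (τ ω) ω) ∂μ
        ≤ ∫⁻ ω, (ENNReal.ofReal (θ * Sproc L Q Z a' φ (τ ω) ω)
            + ENNReal.ofReal ((1 - θ) * Z (τ ω) ω)) ∂μ := by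
          refine lintegral_mono fun ω => ?_
          exact le_trans (ENNReal.ofReal_le_ofReal
            (sproc_convex hs hθ0 hθ1 hθ φ (τ ω) ω)) ENNReal.ofReal_add_le
      _ = ∫⁻ ω, ENNReal.ofReal (θ * Sproc L Q Z a' φ (τ ω) ω) ∂μ
            + ∫⁻ ω, ENNReal.ofReal ((1 - θ) * Z (τ ω) ω) ∂μ :=
          lintegral_add_right' _ hZmeas.aemeasurable
      _ = ENNReal.ofReal θ * ∫⁻ ω, ENNReal.ofReal (Sproc L Q Z a' φ (τ ω) ω) ∂μ
            + ENNReal.ofReal (1 - θ) * ∫⁻ ω, ENNReal.ofReal (Z (τ ω) ω) ∂μ := by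
          simp_rw [ENNReal.ofReal_mul hθ0, ENNReal.ofReal_mul (by linarith : (0:ℝ) ≤ 1 - θ)]
          rw [lintegral_const_mul' _ _ ENNReal.ofReal_ne_top,
            lintegral_const_mul' _ _ ENNReal.ofReal_ne_top]
      _ ≤ ENNReal.ofReal θ * Sup + ENNReal.ofReal (1 - θ) * 1 := by
          refine add_le_add (mul_le_mul_right ?_ _) (mul_le_mul_right ?_ _)
          · exact le_iSup (fun τ' : {τ' : Ω → ℝ≥0 // MemT ℱ T τ'} =>
              ∫⁻ ω, ENNReal.ofReal (Sproc L Q Z a' φ (τ'.1 ω) ω) ∂μ)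
              ⟨τ, hτstop, nn, hnn, hτn⟩
          · exact lintegral_Z_le_one hs hτstop hτn'
      _ = ENNReal.ofReal θ * Sup + ENNReal.ofReal (1 - θ) := by rw [mul_one]
  refine lt_of_le_of_lt (iSup_le key) ?_
  exact ENNReal.add_lt_top.mpr ⟨ENNReal.mul_lt_top ENNReal.ofReal_lt_top h,
    ENNReal.ofReal_lt_top⟩

end Aux

open scoped Topology in
/-- Corollary (Novikov-Kazamaki orders): for `a < b < 1 < c < d` and any continuous lower
function `φ`, one has `𝒩𝒦^φ(a) ⊆ 𝒩𝒦^φ(b)` and `𝒩𝒦^φ(d) ⊆ 𝒩𝒦^φ(c)`, where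
`L ∈ 𝒩𝒦^φ(e)` iff `sup_{τ ∈ 𝒯} E[S^{L,e,φ}_τ] < ∞`. -/
theorem novikov_kazamaki_orders
    {Ω : Type*} {m : MeasurableSpace Ω} (ℱ : Filtration ℝ≥0 m) (μ : Measure Ω)
    [IsProbabilityMeasure μ] (T : ℝ≥0∞)
    (φ : ℝ → ℝ) (hφcont : ContinuousOn φ (Ici 0)) (hφlow : IsLowerFunction φ)
    (a b c d : ℝ) (hab : a < b) (hb1 : b < 1) (h1c : 1 < c) (hcd : c < d) :
    ∀ L Q Z : ℝ≥0 → Ω → ℝ, StochExpSetup ℱ μ L Q Z →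
      (NKCond ℱ μ L Q Z T a φ → NKCond ℱ μ L Q Z T b φ) ∧
      (NKCond ℱ μ L Q Z T d φ → NKCond ℱ μ L Q Z T c φ) := by
  intro L Q Z hs
  constructor
  · refine nk_mono hs T φ (θ := (b - 1) / (a - 1)) ?_ ?_ ?_
    · rw [show b - 1 = -(1 - b) by ring, show a - 1 = -(1 - a) by ring, neg_div_neg_eq]
      exact div_nonneg (by linarith) (by linarith)
    · rw [show b - 1 = -(1 - b) by ring, show a - 1 = -(1 - a) by ring, neg_div_neg_eq]
      rw [div_le_one (by linarith)]
      linarith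
    · exact (div_mul_cancel₀ (b - 1) (sub_ne_zero.mpr (ne_of_lt (hab.trans hb1)))).symm
  · refine nk_mono hs T φ (θ := (c - 1) / (d - 1)) ?_ ?_ ?_
    · exact div_nonneg (by linarith) (by linarith)
    · rw [div_le_one (by linarith)]
      linarith
    · exact (div_mul_cancel₀ (c - 1) (sub_ne_zero.mpr (ne_of_gt (h1c.trans hcd)))).symm

end PaperNK
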